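/- arXiv:1510.09111 — 5 statements merged into one kernel-verified Lean document; each statement's English description precedes it below -/
import Mathlib

section
/- Let A be a commutative ℂ-algebra with an antisymmetric biderivation bracket {·,·}, and let B = A ⊕ Aε with product (f + εf')·(g + εg') = fg + ε(fg' + f'g + ½{f,g}). Let P' ⊆ B be a two-sided ideal and set P = {f ∈ A : ∃ f' ∈ A, f + εf' ∈ P'}. Assume that whenever εh ∈ P' one has h ∈ P. Then P is a Lagrangian ideal of A, i.e. {f,g} ∈ P for all f,g ∈ P. -/
/-- The product on `B = A ⊕ Aε`: `(f + εf')·(g + εg') = fg + ε(fg' + f'g + ½{f,g})`,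
encoded on pairs `(f, f')`. -/
noncomputable def derivedMul {A : Type*} [CommRing A] [Algebra ℂ A] (br : A → A → A)
    (p q : A × A) : A × A :=
  (p.1 * q.1, p.1 * q.2 + p.2 * q.1 + (1 / 2 : ℂ) • br p.1 q.1)

/-- The image `P ⊆ A` of an ideal `P' ⊆ B = A ⊕ Aε` under reduction mod `ε`:
`P = {f : ∃ f', f + εf' ∈ P'}`. -/
def idealImage {A : Type*} (P' : Set (A × A)) : Set A := {f : A | ∃ f' : A, (f, f') ∈ P'}

/-- If `P'` is a two-sided ideal of `B = A ⊕ Aε` (for the product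
`(f + εf')·(g + εg') = fg + ε(fg' + f'g + ½{f,g})`, where `{·,·}` is a bilinear antisymmetric
biderivation) whose image mod `ε` is `P`, and if `εh ∈ P'` implies `h ∈ P` (regularity),
then `P` is a Lagrangian ideal: `{f,g} ∈ P` for all `f, g ∈ P`. -/
theorem regular_ideal_isLagrangian {A : Type*} [CommRing A] [Algebra ℂ A]
    (br : A → A → A)
    (hadd_left : ∀ f g h : A, br (f + g) h = br f h + br g h)
    (hadd_right : ∀ f g h : A, br f (g + h) = br f g + br f h)
    (hsmul_left : ∀ (c : ℂ) (f g : A), br (c • f) g = c • br f g)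
    (hsmul_right : ∀ (c : ℂ) (f g : A), br f (c • g) = c • br f g)
    (hanti : ∀ f g : A, br f g = - br g f)
    (hleibniz_left : ∀ f g h : A, br (f * g) h = f * br g h + br f h * g)
    (hleibniz_right : ∀ f g h : A, br f (g * h) = br f g * h + g * br f h)
    (P' : Set (A × A))
    (hP'zero : (0 : A × A) ∈ P')
    (hP'add : ∀ p ∈ P', ∀ q ∈ P', p + q ∈ P')
    (hP'neg : ∀ p ∈ P', -p ∈ P')
    (hP'mul_left : ∀ b : A × A, ∀ p ∈ P', derivedMul br b p ∈ P')
    (hP'mul_right : ∀ b : A × A, ∀ p ∈ P', derivedMul br p b ∈ P')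
    (hreg : ∀ h : A, ((0 : A), h) ∈ P' → h ∈ idealImage P') :
    ∀ f g : A, f ∈ idealImage P' → g ∈ idealImage P' → br f g ∈ idealImage P' := by
  rintro f g ⟨f', hf⟩ ⟨g', hg⟩
  have h1 := hP'mul_left (f, f') _ hg
  have h2 := hP'mul_left (g, g') _ hf
  have h3 := hP'add _ h1 _ (hP'neg _ h2)
  apply hreg
  convert h3 using 1
  simp only [derivedMul, Prod.mk_add_mk, Prod.neg_mk, Prod.mk.injEq]
  constructor
  · ring
  · have hh : (1 / 2 : ℂ) • br f g + (1 / 2 : ℂ) • br f g = br f g := by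
      rw [← add_smul]; norm_num
    rw [hanti g f, smul_neg]
    linear_combination -hh
end

section
/- Let A be a commutative ℂ-algebra with an antisymmetric biderivation bracket {·,·}, and let B = A ⊕ Aε with product (f + εf')·(g + εg') = fg + ε(fg' + f'g + ½{f,g}). Let P' ⊆ B be a two-sided ideal, P = {f ∈ A : ∃ f', f + εf' ∈ P'}, and assume εh ∈ P' implies h ∈ P. Then the map Υ : P → A/P defined by Υ(f) = f' mod P for any f' with f + εf' ∈ P' is well-defined (independent of the choice of f'), and for every f ∈ P and g ∈ A one has Υ(gf) = gΥ(f) + ½{g,f} in A/P. -/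
/-- Let `P'` be a two-sided ideal of `B = A ⊕ Aε` (for the product
`(f + εf')·(g + εg') = fg + ε(fg' + f'g + ½{f,g})`, where `{·,·}` is a bilinear antisymmetric
biderivation), with image `P` mod `ε`, satisfying the regularity hypothesis that `εh ∈ P'`
implies `h ∈ P`.  Then the map `Υ : P → A/P`, `Υ(f) = f' mod P` whenever `f + εf' ∈ P'`, is
well defined (any two choices of `f'` agree mod `P`), and it satisfies
`Υ(gf) = gΥ(f) + ½{g,f}` in `A/P`: any representative `h` of `Υ(gf)` is congruent mod `P`
to `g·f' + ½{g,f}`. -/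
theorem upsilon_wellDefined_and_leibniz {A : Type*} [CommRing A] [Algebra ℂ A]
    (br : A → A → A)
    (hadd_left : ∀ f g h : A, br (f + g) h = br f h + br g h)
    (hadd_right : ∀ f g h : A, br f (g + h) = br f g + br f h)
    (hsmul_left : ∀ (c : ℂ) (f g : A), br (c • f) g = c • br f g)
    (hsmul_right : ∀ (c : ℂ) (f g : A), br f (c • g) = c • br f g)
    (hanti : ∀ f g : A, br f g = - br g f)
    (hleibniz_left : ∀ f g h : A, br (f * g) h = f * br g h + br f h * g)
    (hleibniz_right : ∀ f g h : A, br f (g * h) = br f g * h + g * br f h)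
    (P' : Set (A × A))
    (hP'zero : (0 : A × A) ∈ P')
    (hP'add : ∀ p ∈ P', ∀ q ∈ P', p + q ∈ P')
    (hP'neg : ∀ p ∈ P', -p ∈ P')
    (hP'mul_left : ∀ b : A × A, ∀ p ∈ P', derivedMul br b p ∈ P')
    (hP'mul_right : ∀ b : A × A, ∀ p ∈ P', derivedMul br p b ∈ P')
    (hreg : ∀ h : A, ((0 : A), h) ∈ P' → h ∈ idealImage P') :
    (∀ f f₁ f₂ : A, (f, f₁) ∈ P' → (f, f₂) ∈ P' → f₁ - f₂ ∈ idealImage P') ∧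
    (∀ f f' g h : A, (f, f') ∈ P' → (g * f, h) ∈ P' →
      h - (g * f' + (1 / 2 : ℂ) • br g f) ∈ idealImage P') := by
  constructor
  · intro f f₁ f₂ h1 h2
    have := hP'add _ h1 _ (hP'neg _ h2)
    have h0 : ((0 : A), f₁ - f₂) ∈ P' := by
      convert this using 2 <;> simp [Prod.ext_iff, sub_eq_add_neg]
    exact hreg _ h0
  · intro f f' g h hf hgf
    have hmul := hP'mul_left (g, 0) _ hf
    have : derivedMul br (g, 0) (f, f') = (g * f, g * f' + (1 / 2 : ℂ) • br g f) := by
      simp [derivedMul]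
    rw [this] at hmul
    have := hP'add _ hgf _ (hP'neg _ hmul)
    have h0 : ((0 : A), h - (g * f' + (1 / 2 : ℂ) • br g f)) ∈ P' := by
      convert this using 2 <;> simp [Prod.ext_iff, sub_eq_add_neg]
    exact hreg _ h0
end

section
/- Let A₁, A₂, B₁, B₂ ∈ SL₂(ℂ) and let ξ, η ∈ sl₂(ℂ) be traceless 2×2 complex matrices. Then tr(B₂ η B₁ A₂ ξ A₁) − tr(B₁⁻¹ η B₂⁻¹ A₂ ξ A₁) = tr(A₂ ξ A₁) · tr(B₂ η B₁). -/
open Matrix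

lemma add_adjugate_fin_two (M : Matrix (Fin 2) (Fin 2) ℂ) :
    M + adjugate M = M.trace • 1 := by
  rw [adjugate_fin_two, trace_fin_two]
  ext i j
  fin_cases i <;> fin_cases j <;> simp [Matrix.one_apply] <;> ring

lemma adjugate_traceless (η : Matrix (Fin 2) (Fin 2) ℂ) (hη : η.trace = 0) :
    adjugate η = -η := by
  have h := add_adjugate_fin_two η
  rw [hη, zero_smul] at h
  linear_combination (norm := module) h

/-- For `A₁, A₂, B₁, B₂ ∈ SL₂(ℂ)` and traceless `ξ, η ∈ sl₂(ℂ)`: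
`tr(B₂ η B₁ A₂ ξ A₁) − tr(B₁⁻¹ η B₂⁻¹ A₂ ξ A₁) = tr(A₂ ξ A₁)·tr(B₂ η B₁)`. -/
theorem trace_second_derivative_identity
    (A₁ A₂ B₁ B₂ : Matrix.SpecialLinearGroup (Fin 2) ℂ)
    (ξ η : Matrix (Fin 2) (Fin 2) ℂ) (hξ : ξ.trace = 0) (hη : η.trace = 0) :
    ((B₂ : Matrix (Fin 2) (Fin 2) ℂ) * η * (B₁ : Matrix (Fin 2) (Fin 2) ℂ) *
        (A₂ : Matrix (Fin 2) (Fin 2) ℂ) * ξ * (A₁ : Matrix (Fin 2) (Fin 2) ℂ)).trace -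
      (((B₁⁻¹ : Matrix.SpecialLinearGroup (Fin 2) ℂ) : Matrix (Fin 2) (Fin 2) ℂ) * η *
        ((B₂⁻¹ : Matrix.SpecialLinearGroup (Fin 2) ℂ) : Matrix (Fin 2) (Fin 2) ℂ) *
        (A₂ : Matrix (Fin 2) (Fin 2) ℂ) * ξ * (A₁ : Matrix (Fin 2) (Fin 2) ℂ)).trace =
    ((A₂ : Matrix (Fin 2) (Fin 2) ℂ) * ξ * (A₁ : Matrix (Fin 2) (Fin 2) ℂ)).trace *
      ((B₂ : Matrix (Fin 2) (Fin 2) ℂ) * η * (B₁ : Matrix (Fin 2) (Fin 2) ℂ)).trace := by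
  set M : Matrix (Fin 2) (Fin 2) ℂ := (B₂ : Matrix (Fin 2) (Fin 2) ℂ) * η * B₁ with hM
  have hinv : ((B₁⁻¹ : Matrix.SpecialLinearGroup (Fin 2) ℂ) : Matrix (Fin 2) (Fin 2) ℂ) * η *
      ((B₂⁻¹ : Matrix.SpecialLinearGroup (Fin 2) ℂ) : Matrix (Fin 2) (Fin 2) ℂ) = -adjugate M := by
    rw [Matrix.SpecialLinearGroup.coe_inv, Matrix.SpecialLinearGroup.coe_inv, hM,
      adjugate_mul_distrib, adjugate_mul_distrib, adjugate_traceless η hη]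
    noncomm_ring
  have key : M - ((B₁⁻¹ : Matrix.SpecialLinearGroup (Fin 2) ℂ) : Matrix (Fin 2) (Fin 2) ℂ) * η *
      ((B₂⁻¹ : Matrix.SpecialLinearGroup (Fin 2) ℂ) : Matrix (Fin 2) (Fin 2) ℂ) = M.trace • 1 := by
    rw [hinv, sub_neg_eq_add, add_adjugate_fin_two]
  set X : Matrix (Fin 2) (Fin 2) ℂ := (A₂ : Matrix (Fin 2) (Fin 2) ℂ) * ξ * A₁ with hX
  have expand : M * X - (((B₁⁻¹ : Matrix.SpecialLinearGroup (Fin 2) ℂ) : Matrix (Fin 2) (Fin 2) ℂ) * η *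
      ((B₂⁻¹ : Matrix.SpecialLinearGroup (Fin 2) ℂ) : Matrix (Fin 2) (Fin 2) ℂ)) * X
      = (M.trace • (1 : Matrix (Fin 2) (Fin 2) ℂ)) * X := by
    rw [← key, sub_mul]
  calc (M * ((A₂ : Matrix (Fin 2) (Fin 2) ℂ)) * ξ * A₁).trace -
      (((B₁⁻¹ : Matrix.SpecialLinearGroup (Fin 2) ℂ) : Matrix (Fin 2) (Fin 2) ℂ) * η *
        ((B₂⁻¹ : Matrix.SpecialLinearGroup (Fin 2) ℂ) : Matrix (Fin 2) (Fin 2) ℂ) *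
        (A₂ : Matrix (Fin 2) (Fin 2) ℂ) * ξ * A₁).trace
      = (M * X - (((B₁⁻¹ : Matrix.SpecialLinearGroup (Fin 2) ℂ) : Matrix (Fin 2) (Fin 2) ℂ) * η *
          ((B₂⁻¹ : Matrix.SpecialLinearGroup (Fin 2) ℂ) : Matrix (Fin 2) (Fin 2) ℂ)) * X).trace := by
        simp only [trace_sub, hM, hX, Matrix.mul_assoc]
    _ = X.trace * M.trace := by
        rw [expand, smul_mul_assoc, one_mul, trace_smul, smul_eq_mul, mul_comm]
end

section
/- Let H = diag(1,−1), E = E₁₂, F = E₂₁ be the standard basis of sl₂(ℂ), and for a bilinear form φ on sl₂(ℂ) set Q(φ) = φ(H,H) + 2φ(E,F) + 2φ(F,E). Let A, B ∈ SL₂(ℂ) and define the bilinear form φ on sl₂(ℂ) by φ(ξ,η) = tr(B η A ξ). Then Q(φ) = tr(A)·tr(B) + tr(AB⁻¹). -/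
/-- Standard basis `H = diag(1,−1)` of `sl₂(ℂ)`. -/
def Hmat : Matrix (Fin 2) (Fin 2) ℂ := !![1, 0; 0, -1]
/-- Standard basis `E = E₁₂` of `sl₂(ℂ)`. -/
def Emat : Matrix (Fin 2) (Fin 2) ℂ := !![0, 1; 0, 0]
/-- Standard basis `F = E₂₁` of `sl₂(ℂ)`. -/
def Fmat : Matrix (Fin 2) (Fin 2) ℂ := !![0, 0; 1, 0]

/-- For `A, B ∈ SL₂(ℂ)` and the bilinear form `φ(ξ,η) = tr(B η A ξ)` on `sl₂(ℂ)`, one has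
`Q(φ) := φ(H,H) + 2φ(E,F) + 2φ(F,E) = tr(A)·tr(B) + tr(AB⁻¹)`. -/
theorem Q_of_crossing_form (A B : Matrix.SpecialLinearGroup (Fin 2) ℂ) :
    ((B : Matrix (Fin 2) (Fin 2) ℂ) * Hmat * (A : Matrix (Fin 2) (Fin 2) ℂ) * Hmat).trace +
      2 * ((B : Matrix (Fin 2) (Fin 2) ℂ) * Fmat * (A : Matrix (Fin 2) (Fin 2) ℂ) * Emat).trace +
      2 * ((B : Matrix (Fin 2) (Fin 2) ℂ) * Emat * (A : Matrix (Fin 2) (Fin 2) ℂ) * Fmat).trace =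
    (A : Matrix (Fin 2) (Fin 2) ℂ).trace * (B : Matrix (Fin 2) (Fin 2) ℂ).trace +
      ((A : Matrix (Fin 2) (Fin 2) ℂ) *
        ((B⁻¹ : Matrix.SpecialLinearGroup (Fin 2) ℂ) : Matrix (Fin 2) (Fin 2) ℂ)).trace := by
  have hB : (B : Matrix (Fin 2) (Fin 2) ℂ).det = 1 := B.2
  rw [Matrix.SpecialLinearGroup.coe_inv]
  rw [Matrix.det_fin_two] at hB
  simp [Hmat, Emat, Fmat, Matrix.trace_fin_two, Matrix.mul_apply, Fin.sum_univ_two,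
    Matrix.adjugate_fin_two]
  ring_nf
end

section
/- Let H = diag(1,−1), E = E₁₂, F = E₂₁ be the standard basis of sl₂(ℂ), and for a bilinear form φ on sl₂(ℂ) set Q(φ) = φ(H,H) + 2φ(E,F) + 2φ(F,E). Let A, B ∈ SL₂(ℂ) and define the bilinear form φ on sl₂(ℂ) by φ(ξ,η) = tr(Aξ)·tr(B⁻¹η). Then Q(φ) = tr(AB⁻¹) − tr(AB). -/
/-- For `A, B ∈ SL₂(ℂ)` and the bilinear form `φ(ξ,η) = tr(Aξ)·tr(B⁻¹η)` on `sl₂(ℂ)`, one has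
`Q(φ) := φ(H,H) + 2φ(E,F) + 2φ(F,E) = tr(AB⁻¹) − tr(AB)`. -/
theorem Q_of_disconnected_crossing_form (A B : Matrix.SpecialLinearGroup (Fin 2) ℂ) :
    ((A : Matrix (Fin 2) (Fin 2) ℂ) * Hmat).trace *
        (((B⁻¹ : Matrix.SpecialLinearGroup (Fin 2) ℂ) : Matrix (Fin 2) (Fin 2) ℂ) * Hmat).trace +
      2 * ((A : Matrix (Fin 2) (Fin 2) ℂ) * Emat).trace *
        (((B⁻¹ : Matrix.SpecialLinearGroup (Fin 2) ℂ) : Matrix (Fin 2) (Fin 2) ℂ) * Fmat).trace +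
      2 * ((A : Matrix (Fin 2) (Fin 2) ℂ) * Fmat).trace *
        (((B⁻¹ : Matrix.SpecialLinearGroup (Fin 2) ℂ) : Matrix (Fin 2) (Fin 2) ℂ) * Emat).trace =
    ((A : Matrix (Fin 2) (Fin 2) ℂ) *
        ((B⁻¹ : Matrix.SpecialLinearGroup (Fin 2) ℂ) : Matrix (Fin 2) (Fin 2) ℂ)).trace -
      ((A : Matrix (Fin 2) (Fin 2) ℂ) * (B : Matrix (Fin 2) (Fin 2) ℂ)).trace := by
  rw [Matrix.SpecialLinearGroup.coe_inv, Matrix.adjugate_fin_two]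
  simp [Hmat, Emat, Fmat, Matrix.trace_fin_two, Matrix.mul_apply, Fin.sum_univ_two]
  ring
end
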